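/- The string rewriting system on words over the alphabet {\delta, e_1, ..., e_{n-1}} with rules e_i \delta \to \delta e_i, e_i e_i \to \delta e_i, e_i e_{i+1} e_i \to e_i, e_i e_{i-1} e_i \to e_i, and e_i e_j \to e_j e_i for j < i - 1 is terminating. -/
import Mathlib


/-- The alphabet `{δ, e_1, …, e_{n-1}}`: `none` is `δ` and `some i` is the
generator `e_{i+1}` for `i : Fin (n-1)`. -/
abbrev TLLetter (n : ℕ) := Option (Fin (n - 1))

/-- The rewriting rules: `e_i δ → δ e_i`, `e_i e_i → δ e_i`,
`e_i e_{i±1} e_i → e_i`, and `e_i e_j → e_j e_i` for `j < i - 1`. -/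
inductive TLRule (n : ℕ) : List (TLLetter n) → List (TLLetter n) → Prop
  | delta (i : Fin (n - 1)) : TLRule n [some i, none] [none, some i]
  | square (i : Fin (n - 1)) : TLRule n [some i, some i] [none, some i]
  | braid (i j : Fin (n - 1)) (h : (i : ℕ) = j + 1 ∨ (j : ℕ) = i + 1) :
      TLRule n [some i, some j, some i] [some i]
  | comm (i j : Fin (n - 1)) (h : (j : ℕ) + 1 < i) :
      TLRule n [some i, some j] [some j, some i]

/-- One rewriting step: a rule applied inside an arbitrary context. -/
def TLStep (n : ℕ) (x y : List (TLLetter n)) : Prop :=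
  ∃ u v a b, TLRule n a b ∧ x = u ++ a ++ v ∧ y = u ++ b ++ v

/-- Weight of a letter as a strictly monotone function. -/
def tlWt (n : ℕ) : TLLetter n → ℕ → ℕ
  | none, x => x + 1
  | some i, x => 2 * x + (n - (i : ℕ))

/-- Interpretation of a word. -/
def tlMu (n : ℕ) (w : List (TLLetter n)) : ℕ := w.foldr (tlWt n) 0

lemma tlWt_mono (n : ℕ) (a : TLLetter n) {x y : ℕ} (h : x < y) :
    tlWt n a x < tlWt n a y := by
  cases a <;> simp [tlWt] <;> omega

lemma tlFold_mono (n : ℕ) (u : List (TLLetter n)) {x y : ℕ} (h : x < y) :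
    u.foldr (tlWt n) x < u.foldr (tlWt n) y := by
  induction u with
  | nil => exact h
  | cons a u ih => exact tlWt_mono n a ih

lemma tlRule_dec (n : ℕ) {a b : List (TLLetter n)} (h : TLRule n a b) (x : ℕ) :
    b.foldr (tlWt n) x < a.foldr (tlWt n) x := by
  cases h with
  | delta i =>
      have hi := i.isLt
      simp [tlWt]; omega
  | square i =>
      have hi := i.isLt
      simp [tlWt]; omega
  | braid i j h =>
      have hi := i.isLt
      have hj := j.isLt
      simp [tlWt]; omega
  | comm i j h =>
      have hi := i.isLt
      have hj := j.isLt
      simp [tlWt]; omega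

lemma tlStep_dec (n : ℕ) {x y : List (TLLetter n)} (h : TLStep n x y) :
    tlMu n y < tlMu n x := by
  obtain ⟨u, v, a, b, hr, hx, hy⟩ := h
  subst hx; subst hy
  unfold tlMu
  rw [List.foldr_append, List.foldr_append, List.foldr_append, List.foldr_append]
  exact tlFold_mono n u (tlRule_dec n hr _)

/-- The rewriting system with rules `e_i δ → δ e_i`, `e_i e_i → δ e_i`,
`e_i e_{i±1} e_i → e_i`, `e_i e_j → e_j e_i` (`j < i-1`) is terminating:
there is no infinite rewrite sequence. -/
theorem tl_rewriting_terminating (n : ℕ) :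
    ∀ f : ℕ → List (TLLetter n), ¬ ∀ k : ℕ, TLStep n (f k) (f (k + 1)) := by
  intro f hf
  have key : ∀ k, tlMu n (f k) + k ≤ tlMu n (f 0) := by
    intro k
    induction k with
    | zero => simp
    | succ k ih =>
        have := tlStep_dec n (hf k)
        omega
  have := key (tlMu n (f 0) + 1)
  omega
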